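/- Let G be a C_{2k}-free simple graph (k ≥ 2) and let a be a vertex of G. Then the number of paths with 3 vertices in G whose first vertex is a is at most (2k-2)·n, where n is the number of vertices of G. Equivalently, ∑_{b ≠ a} f(a,b) ≤ (2k-2)n, where f(a,b) is the number of common neighbors of a and b. -/

import Mathlib

open SimpleGraph Finset

section EvenCycleLemma

variable {V : Type*} [Fintype V] [DecidableEq V]

/-- A path in `H` encoded as a function: `x 0, x 1, ..., x m` with consecutive adjacency
and injectivity. -/
def PathFun (H : SimpleGraph V) (x : ℕ → V) (m : ℕ) : Prop :=
  (∀ i, i < m → H.Adj (x i) (x (i+1))) ∧ ∀ i, i ≤ m → ∀ j, j ≤ m → x i = x j → i = j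

/-- A cycle in `H` encoded as a function on `{0, ..., L-1}` with cyclic adjacency and
injectivity. -/
def CycFun (H : SimpleGraph V) (z : ℕ → V) (L : ℕ) : Prop :=
  (∀ i, i < L → H.Adj (z i) (z ((i+1) % L))) ∧ ∀ i, i < L → ∀ j, j < L → z i = z j → i = j

/-- Parity/covering lemma: a 0-1 sequence with no two consecutive zeros and no two ones at
(even, positive) distance `d` apart cannot exist. -/
lemma chi_lemma {d : ℕ} (hd : 0 < d) (hde : d % 2 = 0) (χ : ℕ → Prop)
    (hcov : ∀ i, χ i ∨ χ (i+1)) (hnd : ∀ i, ¬(χ i ∧ χ (i + d))) : False := by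
  have two : ∀ i, χ i → χ (i+2) := by
    intro i hi
    have h1 : ¬ χ (i + d) := fun h => hnd i ⟨hi, h⟩
    have h2 : χ (i + d + 1) := (hcov (i+d)).resolve_left h1
    have h3 : ¬ χ (i + 1) := by
      intro h
      exact hnd (i+1) ⟨h, by rw [show i + 1 + d = i + d + 1 by omega]; exact h2⟩
    exact (hcov (i+1)).resolve_left h3
  have it : ∀ t i, χ i → χ (i + 2*t) := by
    intro t
    induction t with
    | zero => simpa using fun i h => h
    | succ n ih =>
      intro i hi
      have := two _ (ih i hi)
      rwa [show i + 2*n + 2 = i + 2*(n+1) by omega] at this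
  have hstart : χ 0 ∨ χ 1 := hcov 0
  rcases hstart with h | h
  · exact hnd 0 ⟨h, by have := it (d/2) 0 h; rwa [show 0 + 2*(d/2) = 0 + d by omega] at this⟩
  · exact hnd 1 ⟨h, by have := it (d/2) 1 h; rwa [show 1 + 2*(d/2) = 1 + d by omega] at this⟩

/-- No-two-consecutive subsets of `[1, N]` have at most `(N+1)/2` elements. -/
lemma no_consec_card {N : ℕ} (A : Finset ℕ) (hA : A ⊆ Finset.Icc 1 N)
    (h : ∀ j ∈ A, j + 1 ∉ A) : A.card ≤ (N+1)/2 := by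
  have : A.card ≤ (Finset.Icc 1 ((N+1)/2)).card := by
    apply Finset.card_le_card_of_injOn (fun j => (j+1)/2)
    · intro j hj
      have := hA hj
      simp only [Finset.mem_coe, Finset.mem_Icc] at this ⊢
      omega
    · intro j₁ hj₁ j₂ hj₂ heq
      simp only [Finset.coe_Icc] at *
      by_contra hne
      rcases Nat.lt_or_ge j₁ j₂ with hlt | hge
      · have : j₂ = j₁ + 1 := by
          have h1 := hA hj₁; have h2 := hA hj₂
          simp only [Finset.mem_Icc] at h1 h2
          omega
        exact h j₁ hj₁ (this ▸ hj₂)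
      · have hlt : j₂ < j₁ := by omega
        have : j₁ = j₂ + 1 := by
          have h1 := hA hj₁; have h2 := hA hj₂
          simp only [Finset.mem_Icc] at h1 h2
          omega
        exact h j₂ hj₂ (this ▸ hj₁)
  simpa [Nat.card_Icc] using this

/-- The key arithmetic lemma about the S-pattern along a longest path. -/
lemma X7 {k M : ℕ} (hk : 2 ≤ k) (σ : ℕ → Prop) (A : Finset ℕ)
    (hM : 2*k ≤ M) (h0 : σ 0) (hm : σ M)
    (hcov : ∀ i, i + 1 ≤ M → σ i ∨ σ (i+1))
    (hnd : ∀ i, i + (2*k-2) ≤ M → ¬(σ i ∧ σ (i + (2*k-2))))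
    (hA1 : A ⊆ Finset.Icc 1 (2*k-3))
    (hA2 : k ≤ A.card)
    (hA3 : ∀ j ∈ A, σ (j-1))
    (hdet : ∀ j ∈ A, ∀ i, i < j → (2*k-2) + j ≤ M + 1 + i → ¬(σ i ∧ σ ((2*k-2) + j - 1 - i)))
    : False := by
  set d := 2*k-2 with hd
  have hd2 : 2 ≤ d := by omega
  have s1 : ¬ σ d := by
    intro h
    exact hnd 0 (by omega) ⟨h0, by simpa using h⟩
  have s2 : σ (d+1) := by
    rcases hcov d (by omega) with h | h
    · exact absurd h s1
    · exact h
  have s3 : ¬ σ 1 := fun h => hnd 1 (by omega) ⟨h, by rw [show 1 + d = d + 1 by omega]; exact s2⟩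
  have s4 : σ 2 := (hcov 1 (by omega)).resolve_left s3
  -- descent from M
  have sB : ∀ j, j ≤ M → d+1 ≤ j → σ j → σ (d+1) ∨ σ (d+2) := by
    intro j
    induction j using Nat.strong_induction_on with
    | _ j ih =>
      intro hjM hjd hσ
      rcases Nat.lt_or_ge j (d+3) with hsmall | hbig
      · have : j = d+1 ∨ j = d+2 := by omega
        rcases this with rfl | rfl
        · exact Or.inl hσ
        · exact Or.inr hσ
      · have c1 : ¬ σ (j - d) := by
          intro h
          exact hnd (j-d) (by omega) ⟨h, by rw [show j - d + d = j by omega]; exact hσ⟩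
        have c2 : σ (j - d - 1) := by
          rcases hcov (j-d-1) (by omega) with h | h
          · exact h
          · rw [show j - d - 1 + 1 = j - d by omega] at h
            exact absurd h c1
        have c3 : ¬ σ (j-1) := by
          intro h
          exact hnd (j-d-1) (by omega) ⟨c2, by rw [show j - d - 1 + d = j - 1 by omega]; exact h⟩
        have c4 : σ (j-2) := by
          rcases hcov (j-2) (by omega) with h | h
          · exact h
          · rw [show j - 2 + 1 = j - 1 by omega] at h
            exact absurd h c3
        exact ih (j-2) (by omega) (by omega) (by omega) c4
  rcases sB M le_rfl (by omega) hm with hd1 | hd2'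
  · -- σ (d+1) : no two consecutive elements of A
    have hconsec : ∀ j ∈ A, j + 1 ∉ A := by
      intro j hj hj1
      have hσj : σ (j - 1) := hA3 j hj
      have hjb := hA1 hj
      simp only [Finset.mem_Icc] at hjb
      have := hdet (j+1) hj1 (j-1) (by omega) (by omega)
      apply this
      constructor
      · exact hσj
      · rw [show d + (j+1) - 1 - (j-1) = d + 1 by omega]
        exact hd1
    have := no_consec_card A hA1 hconsec
    have : A.card ≤ k - 1 := by
      calc A.card ≤ (2*k-3+1)/2 := this
        _ ≤ k - 1 := by omega
    omega
  · -- σ (d+2) contradicts σ 2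
    exact hnd 2 (by omega) ⟨s4, by rw [show 2 + d = d + 2 by omega]; exact hd2'⟩


/-- A functional cycle of length `L ≥ 3` gives a genuine `Walk.IsCycle` of length `L`. -/
lemma cycfun_to_walk {G : SimpleGraph V} {z : ℕ → V} {L : ℕ} (hz : CycFun G z L) (hL : 3 ≤ L) :
    ∃ (u : V) (w : G.Walk u u), w.IsCycle ∧ w.length = L := by
  obtain ⟨hadj, hinj⟩ := hz
  -- build the path z 0 → z j
  have key : ∀ j, j < L → ∃ p : G.Walk (z 0) (z j), p.length = j ∧
      p.support = (List.range (j+1)).map z ∧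
      p.edges = (List.range j).map (fun i => s(z i, z (i+1))) := by
    intro j
    induction j with
    | zero =>
      intro _
      exact ⟨SimpleGraph.Walk.nil, rfl, by simp [List.range_succ], by simp⟩
    | succ n ih =>
      intro hn
      obtain ⟨p, hl, hs, he⟩ := ih (by omega)
      have hadj' : G.Adj (z n) (z (n+1)) := by
        have := hadj n (by omega)
        rwa [Nat.mod_eq_of_lt (by omega)] at this
      refine ⟨p.concat hadj', ?_, ?_, ?_⟩
      · simp [SimpleGraph.Walk.length_concat, hl]
      · rw [SimpleGraph.Walk.support_concat, hs, List.range_succ (n := n+1), List.map_append]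
        simp [List.concat_eq_append]
      · rw [SimpleGraph.Walk.edges_concat, he, List.range_succ (n := n), List.map_append]
        simp [List.concat_eq_append]
  obtain ⟨p, hl, hs, he⟩ := key (L-1) (by omega)
  have hadjLast : G.Adj (z (L-1)) (z 0) := by
    have := hadj (L-1) (by omega)
    rwa [show (L-1+1) % L = 0 by rw [show L - 1 + 1 = L by omega]; exact Nat.mod_self L] at this
  refine ⟨z (L-1), SimpleGraph.Walk.cons hadjLast p, ?_, ?_⟩
  · rw [SimpleGraph.Walk.cons_isCycle_iff]
    constructor
    · rw [SimpleGraph.Walk.isPath_def, hs]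
      refine List.Nodup.map_on ?_ List.nodup_range
      intro i hi j hj hij
      rw [List.mem_range] at hi hj
      exact hinj i (by omega) j (by omega) hij
    · rw [he]
      intro hmem
      rw [List.mem_map] at hmem
      obtain ⟨i, hi, heq⟩ := hmem
      rw [List.mem_range] at hi
      rw [Sym2.eq_iff] at heq
      rcases heq with ⟨h1, h2⟩ | ⟨h1, h2⟩
      · have := hinj i (by omega) (L-1) (by omega) h1
        omega
      · have hi0 : i = 0 := hinj i (by omega) 0 (by omega) h1
        subst hi0
        have := hinj 1 (by omega) (L-1) (by omega) h2
        omega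
  · simp [SimpleGraph.Walk.length_cons, hl]; omega

lemma pathfun_lt_card {H : SimpleGraph V} {x : ℕ → V} {m : ℕ} (hx : PathFun H x m) :
    m < Fintype.card V := by
  have : Function.Injective (fun i : Fin (m+1) => x i.1) := by
    intro i j hij
    exact Fin.ext (hx.2 i.1 (by omega) j.1 (by omega) hij)
  have := Fintype.card_le_of_injective _ this
  simpa using this

lemma lemX (H : SimpleGraph V) [DecidableRel H.Adj] (S : Finset V) (k : ℕ) (hk : 2 ≤ k) (b₀ : V)
    (hcov : ∀ u v, H.Adj u v → u ∈ S ∨ v ∈ S)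
    (hdS : ∀ v, H.Reachable b₀ v → v ∈ S → k ≤ H.degree v)
    (hdT : ∀ v, H.Reachable b₀ v → v ∉ S → 2*k - 1 ≤ H.degree v)
    (R : Finset V) (hR : ∀ v ∈ R, H.Reachable b₀ v) (hRcard : 2*k ≤ R.card) :
    (∃ x, PathFun H x (2*k-2) ∧ x 0 ∈ S ∧ x (2*k-2) ∈ S) ∨ (∃ z, CycFun H z (2*k)) := by
  classical
  by_contra hcon
  rw [not_or] at hcon
  obtain ⟨hnop, hnoc⟩ := hcon
  -- any cycle of length ≥ 2k-1 is impossible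
  have hcu : ∀ (z : ℕ → V) (L : ℕ), CycFun H z L → 2*k - 1 ≤ L → False := by
    intro z L hz hL
    by_cases hL2k : L = 2*k
    · exact hnoc ⟨z, hL2k ▸ hz⟩
    have hdL : 2*k - 2 < L := by omega
    have hLpos : 0 < L := by omega
    set χ : ℕ → Prop := fun i => z (i % L) ∈ S with hχ
    have hmodsucc : ∀ i : ℕ, (i + 1) % L = (i % L + 1) % L := by
      intro i
      conv_lhs => rw [Nat.add_mod]
      rw [Nat.mod_eq_of_lt (show 1 < L by omega)]
    have hχcov : ∀ i, χ i ∨ χ (i+1) := by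
      intro i
      have := hcov _ _ (hz.1 (i % L) (Nat.mod_lt _ hLpos))
      rcases this with h | h
      · exact Or.inl h
      · right
        rw [hχ]
        simp only
        rw [hmodsucc i]
        exact h
    have hχnd : ∀ i, ¬(χ i ∧ χ (i + (2*k-2))) := by
      rintro i ⟨h1, h2⟩
      apply hnop
      refine ⟨fun j => z ((i + j) % L), ⟨?_, ?_⟩, ?_, ?_⟩
      · intro j _
        have := hz.1 ((i+j) % L) (Nat.mod_lt _ hLpos)
        have heq : ((i + j) % L + 1) % L = (i + (j+1)) % L := by
          rw [← hmodsucc (i+j), show i + j + 1 = i + (j+1) by omega]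
        rwa [heq] at this
      · intro j₁ hj₁ j₂ hj₂ heq
        have := hz.2 _ (Nat.mod_lt _ hLpos) _ (Nat.mod_lt _ hLpos) heq
        have hmeq : j₁ ≡ j₂ [MOD L] := Nat.ModEq.add_left_cancel' i this
        exact Nat.ModEq.eq_of_lt_of_lt hmeq (by omega) (by omega)
      · simpa using h1
      · exact h2
    exact chi_lemma (show 0 < 2*k-2 by omega) (by omega) χ hχcov hχnd
  -- longest path setup
  set P : ℕ → Prop := fun m => ∃ x, PathFun H x m ∧ H.Reachable b₀ (x 0) with hP
  have hP0 : P 0 := by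
    refine ⟨fun _ => b₀, ⟨fun i hi => absurd hi (by omega), fun i hi j hj _ => by omega⟩, by rfl⟩
  have hPbound : ∀ m, P m → m ≤ Fintype.card V := by
    rintro m ⟨x, hx, -⟩
    exact le_of_lt (pathfun_lt_card hx)
  set M : ℕ := Nat.findGreatest P (Fintype.card V) with hMdef
  have hPM : P M := Nat.findGreatest_spec (Nat.zero_le _) hP0
  have hmax : ∀ m, P m → m ≤ M := fun m hm => Nat.le_findGreatest (hPbound m hm) hm
  obtain ⟨x, hx, hxr⟩ := hPM
  have hreach : ∀ i, i ≤ M → H.Reachable b₀ (x i) := by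
    intro i
    induction i with
    | zero => exact fun _ => hxr
    | succ n ih =>
      intro hn
      exact (ih (by omega)).trans (hx.1 n (by omega)).reachable
  -- all neighbors of the front endpoint of a longest path lie on the path
  have front : ∀ y : ℕ → V, PathFun H y M → H.Reachable b₀ (y 0) →
      ∀ v, H.Adj v (y 0) → ∃ j, 1 ≤ j ∧ j ≤ M ∧ v = y j := by
    intro y hy hyr v hadj
    by_contra hno
    push_neg at hno
    have hvne : ∀ j, j ≤ M → v ≠ y j := by
      intro j hj
      rcases Nat.eq_zero_or_pos j with rfl | hjpos
      · exact hadj.ne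
      · exact hno j hjpos hj
    have : P (M+1) := by
      refine ⟨fun i => if i = 0 then v else y (i-1), ⟨?_, ?_⟩, ?_⟩
      · intro i hi
        rcases Nat.eq_zero_or_pos i with rfl | hipos
        · simpa using hadj
        · have h1 : ¬ (i = 0) := by omega
          have h2 : ¬ (i + 1 = 0) := by omega
          simp only [h1, h2, if_false]
          have := hy.1 (i-1) (by omega)
          rwa [show i + 1 - 1 = i - 1 + 1 by omega]
      · intro i hi j hj heq
        rcases Nat.eq_zero_or_pos i with rfl | hipos <;>
          rcases Nat.eq_zero_or_pos j with rfl | hjpos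
        · rfl
        · simp only [if_pos rfl, if_neg (by omega : ¬ j = 0)] at heq
          exact absurd heq (hvne (j-1) (by omega))
        · simp only [if_pos rfl, if_neg (by omega : ¬ i = 0)] at heq
          exact absurd heq.symm (hvne (i-1) (by omega))
        · simp only [if_neg (by omega : ¬ i = 0), if_neg (by omega : ¬ j = 0)] at heq
          have := hy.2 (i-1) (by omega) (j-1) (by omega) heq
          omega
      · simp only [if_pos rfl]
        exact hyr.trans hadj.reachable.symm
    have := hmax _ this
    omega
  -- endpoint bundle for any longest path
  have endp : ∀ y : ℕ → V, PathFun H y M → H.Reachable b₀ (y 0) →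
      y 0 ∈ S ∧ (((Finset.Icc 1 M).filter (fun i => H.Adj (y 0) (y i))).card = H.degree (y 0)) ∧
      (∀ i ∈ (Finset.Icc 1 M).filter (fun i => H.Adj (y 0) (y i)), i ≤ 2*k-3) := by
    intro y hy hyr
    set Ay := (Finset.Icc 1 M).filter (fun i => H.Adj (y 0) (y i)) with hAy
    have h2 : ∀ i ∈ Ay, i ≤ 2*k-3 := by
      intro i hi
      simp only [hAy, Finset.mem_filter, Finset.mem_Icc] at hi
      by_contra hgt
      push_neg at hgt
      have hcyc : CycFun H y (i+1) := by
        constructor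
        · intro j hj
          rcases Nat.lt_or_ge j i with hji | hji
          · rw [Nat.mod_eq_of_lt (by omega)]
            exact hy.1 j (by omega)
          · have hji' : j = i := by omega
            subst hji'
            rw [Nat.mod_self]
            exact hi.2.symm
        · intro j₁ hj₁ j₂ hj₂ heq
          exact hy.2 j₁ (by omega) j₂ (by omega) heq
      exact hcu y (i+1) hcyc (by omega)
    have h1 : Ay.card = H.degree (y 0) := by
      rw [← SimpleGraph.card_neighborFinset_eq_degree]
      apply Finset.card_bij (fun i _ => y i)
      · intro i hi
        simp only [hAy, Finset.mem_filter] at hi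
        rw [SimpleGraph.mem_neighborFinset]
        exact hi.2
      · intro i₁ hi₁ i₂ hi₂ heq
        simp only [hAy, Finset.mem_filter, Finset.mem_Icc] at hi₁ hi₂
        exact hy.2 i₁ (by omega) i₂ (by omega) heq
      · intro v hv
        rw [SimpleGraph.mem_neighborFinset] at hv
        obtain ⟨j, hj1, hj2, hj3⟩ := front y hy hyr v hv.symm
        refine ⟨j, ?_, hj3.symm⟩
        simp only [hAy, Finset.mem_filter, Finset.mem_Icc]
        exact ⟨⟨hj1, hj2⟩, hj3 ▸ hv⟩
    have h3 : y 0 ∈ S := by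
      by_contra hyS
      have hdeg := hdT (y 0) hyr hyS
      rw [← h1] at hdeg
      have : Ay ⊆ Finset.Icc 1 (2*k-3) := by
        intro i hi
        have := h2 i hi
        simp only [hAy, Finset.mem_filter, Finset.mem_Icc] at hi ⊢
        omega
      have := Finset.card_le_card this
      rw [Nat.card_Icc] at this
      omega
    exact ⟨h3, h1, h2⟩
  -- the reversed path
  set revx : ℕ → V := fun i => x (M - i) with hrevx
  have hrev : PathFun H revx M := by
    constructor
    · intro i hi
      have := hx.1 (M - i - 1) (by omega)
      rw [show M - i - 1 + 1 = M - i by omega] at this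
      have h2 : revx (i+1) = x (M - i - 1) := congrArg x (by omega)
      rw [h2]
      exact this.symm
    · intro i hi j hj heq
      have := hx.2 (M - i) (by omega) (M - j) (by omega) heq
      omega
  have hrevr : H.Reachable b₀ (revx 0) := by
    simpa only [hrevx, Nat.sub_zero] using hreach M le_rfl
  have hx0S : x 0 ∈ S := (endp x hx hxr).1
  have hxMS : x M ∈ S := by
    have := (endp revx hrev hrevr).1
    simpa only [hrevx, Nat.sub_zero] using this
  have hdeg0 : k ≤ H.degree (x 0) := hdS _ hxr hx0S
  have hdegM : k ≤ H.degree (x M) := hdS _ (hreach M le_rfl) hxMS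
  -- M ≥ 2k by the crossing argument
  have hM : 2*k ≤ M := by
    by_contra hM'
    push_neg at hM'
    obtain ⟨-, hAcard, -⟩ := endp x hx hxr
    obtain ⟨-, hBcard, -⟩ := endp revx hrev hrevr
    set A := (Finset.Icc 1 M).filter (fun i => H.Adj (x 0) (x i)) with hA
    set B' := (Finset.Icc 1 M).filter (fun i => H.Adj (revx 0) (revx i)) with hB'
    have hM1 : 1 ≤ M := by
      by_contra hM0
      push_neg at hM0
      have hMeq : M = 0 := by omega
      have hempty : (Finset.Icc 1 M).filter (fun i => H.Adj (x 0) (x i)) = ∅ := by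
        rw [hMeq]
        rw [Finset.Icc_eq_empty (by omega)]
        exact Finset.filter_empty _
      rw [← hA] at hempty
      rw [hempty] at hAcard
      simp at hAcard
      omega
    set A' := A.image (fun i => i - 1) with hA'
    set B := B'.image (fun j => M - j) with hB
    have hA'card : A'.card = A.card := by
      apply Finset.card_image_of_injOn
      intro i₁ h₁ i₂ h₂ heq
      replace heq : i₁ - 1 = i₂ - 1 := heq
      simp only [hA, Finset.coe_filter, Set.mem_setOf_eq, Finset.mem_Icc] at h₁ h₂
      omega
    have hBcard' : B.card = B'.card := by
      apply Finset.card_image_of_injOn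
      intro i₁ h₁ i₂ h₂ heq
      replace heq : M - i₁ = M - i₂ := heq
      simp only [hB', Finset.coe_filter, Set.mem_setOf_eq, Finset.mem_Icc] at h₁ h₂
      omega
    have hA'sub : A' ⊆ Finset.Icc 0 (M-1) := by
      intro i hi
      simp only [hA', Finset.mem_image, hA, Finset.mem_filter, Finset.mem_Icc] at hi
      obtain ⟨a, ⟨⟨ha1, ha2⟩, -⟩, rfl⟩ := hi
      simp only [Finset.mem_Icc]
      omega
    have hBsub : B ⊆ Finset.Icc 0 (M-1) := by
      intro i hi
      simp only [hB, Finset.mem_image, hB', Finset.mem_filter, Finset.mem_Icc] at hi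
      obtain ⟨a, ⟨⟨ha1, ha2⟩, -⟩, rfl⟩ := hi
      simp only [Finset.mem_Icc]
      omega
    have hunion : (A' ∪ B).card ≤ M := by
      have := Finset.card_le_card (Finset.union_subset hA'sub hBsub)
      rwa [Nat.card_Icc, Nat.sub_zero, show M - 1 + 1 = M by omega] at this
    have hinter : 0 < (A' ∩ B).card := by
      have h := Finset.card_union_add_card_inter A' B
      have hrev0deg : H.degree (revx 0) = H.degree (x M) := by
        rw [show revx 0 = x M by simp [hrevx]]
      have hAc : #A = H.degree (x 0) := by rw [hA]; exact hAcard
      have : 2*k ≤ A'.card + B.card := by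
        rw [hA'card, hBcard', hAc, hBcard, hrev0deg]
        omega
      omega
    obtain ⟨i, hi⟩ := Finset.card_pos.mp hinter
    rw [Finset.mem_inter] at hi
    obtain ⟨hiA, hiB⟩ := hi
    -- extract crossing adjacent pairs
    have hxadj1 : i + 1 ≤ M ∧ H.Adj (x 0) (x (i+1)) := by
      simp only [hA', Finset.mem_image, hA, Finset.mem_filter, Finset.mem_Icc] at hiA
      obtain ⟨a, ⟨⟨ha1, ha2⟩, ha3⟩, rfl⟩ := hiA
      rw [show a - 1 + 1 = a by omega]
      exact ⟨ha2, ha3⟩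
    have hxadj2 : i ≤ M - 1 ∧ H.Adj (x M) (x i) := by
      simp only [hB, Finset.mem_image, hB', Finset.mem_filter, Finset.mem_Icc] at hiB
      obtain ⟨a, ⟨⟨ha1, ha2⟩, ha3⟩, rfl⟩ := hiB
      simp only [hrevx, Nat.sub_zero] at ha3
      exact ⟨by omega, ha3⟩
    -- the crossing cycle through all of x 0 .. x M
    set z : ℕ → V := fun j => if j ≤ i then x j else x (M + i + 1 - j) with hz
    have hiM : i ≤ M - 1 := hxadj2.1
    have hzc : CycFun H z (M+1) := by
      constructor
      · intro j hj
        rcases Nat.lt_or_ge j i with hji | hji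
        · rw [Nat.mod_eq_of_lt (by omega)]
          simp only [hz, if_pos (by omega : j ≤ i), if_pos (by omega : j + 1 ≤ i)]
          exact hx.1 j (by omega)
        rcases Nat.eq_or_lt_of_le hji with heq | hji'
        · rw [Nat.mod_eq_of_lt (by omega)]
          simp only [hz, if_pos (by omega : j ≤ i), if_neg (by omega : ¬ j + 1 ≤ i)]
          rw [show M + i + 1 - (j+1) = M by omega, show j = i from heq.symm]
          exact hxadj2.2.symm
        rcases Nat.lt_or_ge j M with hjM | hjM
        · rw [Nat.mod_eq_of_lt (by omega)]
          simp only [hz, if_neg (by omega : ¬ j ≤ i), if_neg (by omega : ¬ j + 1 ≤ i)]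
          have := hx.1 (M + i - j) (by omega)
          rw [show M + i - j + 1 = M + i + 1 - j by omega] at this
          rw [show M + i + 1 - (j + 1) = M + i - j by omega]
          exact this.symm
        · have hjeq : j = M := by omega
          subst hjeq
          rw [show (M + 1) % (M + 1) = 0 by exact Nat.mod_self _]
          simp only [hz, if_neg (by omega : ¬ M ≤ i), if_pos (by omega : (0:ℕ) ≤ i)]
          rw [show M + i + 1 - M = i + 1 by omega]
          exact hxadj1.2.symm
      · intro j₁ hj₁ j₂ hj₂ heq
        simp only [hz] at heq
        rcases le_or_gt j₁ i with h₁ | h₁ <;> rcases le_or_gt j₂ i with h₂ | h₂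
        · rw [if_pos h₁, if_pos h₂] at heq
          exact hx.2 j₁ (by omega) j₂ (by omega) heq
        · rw [if_pos h₁, if_neg (by omega)] at heq
          have := hx.2 j₁ (by omega) (M + i + 1 - j₂) (by omega) heq
          omega
        · rw [if_neg (by omega), if_pos h₂] at heq
          have := hx.2 (M + i + 1 - j₁) (by omega) j₂ (by omega) heq
          omega
        · rw [if_neg (by omega), if_neg (by omega)] at heq
          have := hx.2 (M + i + 1 - j₁) (by omega) (M + i + 1 - j₂) (by omega) heq
          omega
    set rangeF := (Finset.Icc 0 M).image x with hrangeF
    by_cases hsub : ∀ v ∈ R, v ∈ rangeF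
    · have hsub' : R ⊆ rangeF := hsub
      have : R.card ≤ M + 1 := by
        calc R.card ≤ rangeF.card := Finset.card_le_card hsub'
          _ ≤ (Finset.Icc 0 M).card := Finset.card_image_le
          _ = M + 1 := by rw [Nat.card_Icc]; omega
      exact hcu z (M+1) hzc (by omega)
    · push_neg at hsub
      obtain ⟨v, hvR, hvnot⟩ := hsub
      have hreachv : H.Reachable (x 0) v := (hxr.symm).trans (hR v hvR)
      obtain ⟨p⟩ := hreachv
      -- find a crossing edge
      have cross : ∀ (u w : V) (q : H.Walk u w), u ∈ rangeF → w ∉ rangeF →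
          ∃ s t, H.Adj s t ∧ s ∈ rangeF ∧ t ∉ rangeF := by
        intro u w q
        induction q with
        | nil => intro h1 h2; exact absurd h1 h2
        | @cons a b c hab q ih =>
          intro h1 h2
          by_cases hb : b ∈ rangeF
          · exact ih hb h2
          · exact ⟨a, b, hab, h1, hb⟩
      obtain ⟨s, t, hst, hsF, htF⟩ := cross _ _ p (by
        rw [hrangeF]
        exact Finset.mem_image.mpr ⟨0, by simp, rfl⟩) hvnot
      rw [hrangeF, Finset.mem_image] at hsF
      obtain ⟨i₀, hi₀M, hi₀⟩ := hsF
      rw [Finset.mem_Icc] at hi₀M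
      -- a z-index mapping to x i₀
      have hzidx : ∃ i', i' ≤ M ∧ z i' = x i₀ := by
        rcases le_or_gt i₀ i with h | h
        · exact ⟨i₀, by omega, by simp only [hz, if_pos h]⟩
        · refine ⟨M + i + 1 - i₀, by omega, ?_⟩
          simp only [hz, if_neg (by omega : ¬ M + i + 1 - i₀ ≤ i)]
          congr 1
          omega
      obtain ⟨i', hi'M, hzi'⟩ := hzidx
      have hzrange : ∀ q, q ≤ M → z q ∈ rangeF := by
        intro q hq
        rw [hrangeF, Finset.mem_image]
        simp only [hz]
        rcases le_or_gt q i with h | h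
        · exact ⟨q, by simp [Finset.mem_Icc]; omega, by rw [if_pos h]⟩
        · exact ⟨M + i + 1 - q, by simp [Finset.mem_Icc]; omega, by rw [if_neg (by omega)]⟩
      set y : ℕ → V := fun j => if j = 0 then t else z ((i' + j - 1) % (M+1)) with hy
      have hy0 : y 0 = t := by simp [hy]
      have hyj : ∀ j, 1 ≤ j → y j = z ((i' + j - 1) % (M+1)) := by
        intro j hj
        simp only [hy, if_neg (by omega : ¬ j = 0)]
      have hPnew : P (M+1) := by
        refine ⟨y, ⟨?_, ?_⟩, ?_⟩
        · intro j hj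
          rcases Nat.eq_zero_or_pos j with rfl | hjpos
          · rw [hy0, hyj 1 le_rfl]
            rw [show i' + 1 - 1 = i' by omega, Nat.mod_eq_of_lt (by omega)]
            rw [hzi', hi₀]
            exact hst.symm
          · rw [hyj j (by omega), hyj (j+1) (by omega)]
            have hadjz := hzc.1 ((i' + j - 1) % (M+1)) (Nat.mod_lt _ (by omega))
            have heq : ((i' + j - 1) % (M+1) + 1) % (M+1) = (i' + (j+1) - 1) % (M+1) := by
              conv_rhs => rw [show i' + (j+1) - 1 = (i' + j - 1) + 1 by omega, Nat.add_mod]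
              rw [Nat.mod_eq_of_lt (show 1 < M + 1 by omega)]
            rwa [heq] at hadjz
        · intro j₁ hj₁ j₂ hj₂ heq
          rcases Nat.eq_zero_or_pos j₁ with rfl | h₁ <;> rcases Nat.eq_zero_or_pos j₂ with rfl | h₂
          · rfl
          · rw [hy0, hyj j₂ (by omega)] at heq
            exfalso
            apply htF
            rw [heq]
            exact hzrange _ (Nat.le_of_lt_succ (Nat.mod_lt _ (by omega)))
          · rw [hyj j₁ (by omega), hy0] at heq
            exfalso
            apply htF
            rw [← heq]
            exact hzrange _ (Nat.le_of_lt_succ (Nat.mod_lt _ (by omega)))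
          · rw [hyj j₁ (by omega), hyj j₂ (by omega)] at heq
            have := hzc.2 _ (Nat.mod_lt _ (by omega)) _ (Nat.mod_lt _ (by omega)) heq
            have hmeq : (i' + (j₁ - 1)) % (M+1) = (i' + (j₂ - 1)) % (M+1) := by
              rw [show i' + (j₁ - 1) = i' + j₁ - 1 by omega, show i' + (j₂ - 1) = i' + j₂ - 1 by omega]
              exact this
            have : (j₁ - 1) ≡ (j₂ - 1) [MOD M+1] := Nat.ModEq.add_left_cancel' i' hmeq
            have := Nat.ModEq.eq_of_lt_of_lt this (by omega) (by omega)
            omega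
        · rw [hy0]
          exact (hreach i₀ (by omega)).trans (hi₀ ▸ hst).reachable
      have := hmax _ hPnew
      omega
  -- final block: the S-pattern along the longest path contradicts X7
  set σ : ℕ → Prop := fun i => x i ∈ S with hσ
  set A := (Finset.Icc 1 M).filter (fun i => H.Adj (x 0) (x i)) with hA
  obtain ⟨-, hAcard, hAbd⟩ := endp x hx hxr
  have hAsubM : A ⊆ Finset.Icc 1 M := Finset.filter_subset _ _
  have hA1 : A ⊆ Finset.Icc 1 (2*k-3) := by
    intro i hi
    have h1 := hAsubM hi
    have h2 := hAbd i hi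
    simp only [Finset.mem_Icc] at h1 ⊢
    have hkk : 1 ≤ 2*k-3 := by omega
    omega
  have hA2 : k ≤ A.card := by
    rw [hA, hAcard]
    exact hdeg0
  have hcovσ : ∀ i, i + 1 ≤ M → σ i ∨ σ (i+1) := by
    intro i hi
    exact hcov _ _ (hx.1 i (by omega))
  have hndσ : ∀ i, i + (2*k-2) ≤ M → ¬(σ i ∧ σ (i + (2*k-2))) := by
    rintro i hi ⟨h1, h2⟩
    apply hnop
    refine ⟨fun j => x (i + j), ⟨?_, ?_⟩, ?_, h2⟩
    · intro j hj
      have := hx.1 (i + j) (by omega)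
      rwa [show i + j + 1 = i + (j + 1) by omega] at this
    · intro j₁ hj₁ j₂ hj₂ heq
      have := hx.2 (i + j₁) (by omega) (i + j₂) (by omega) heq
      omega
    · simpa using h1
  have hA3 : ∀ j ∈ A, σ (j-1) := by
    intro j hj
    have hjm := hAsubM hj
    simp only [Finset.mem_Icc] at hjm
    have hjadj : H.Adj (x 0) (x j) := by
      rw [hA] at hj
      exact (Finset.mem_filter.mp hj).2
    set rot : ℕ → V := fun i' => if i' ≤ j - 1 then x (j - 1 - i') else x i' with hrot
    have hrot0 : rot 0 = x (j-1) := by simp [hrot]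
    have hrotp : PathFun H rot M := by
      constructor
      · intro i' hi'
        rcases Nat.lt_or_ge (i'+1) j with hlt | hge
        · -- i' + 1 ≤ j - 1
          simp only [hrot, if_pos (by omega : i' ≤ j - 1), if_pos (by omega : i' + 1 ≤ j - 1)]
          have := hx.1 (j - 1 - i' - 1) (by omega)
          rw [show j - 1 - i' - 1 + 1 = j - 1 - i' by omega] at this
          rw [show j - 1 - (i' + 1) = j - 1 - i' - 1 by omega]
          exact this.symm
        rcases Nat.eq_or_lt_of_le hge with heq | hgt
        · -- i' + 1 = j
          simp only [hrot, if_pos (by omega : i' ≤ j - 1), if_neg (by omega : ¬ i' + 1 ≤ j - 1)]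
          rw [show j - 1 - i' = 0 by omega, show i' + 1 = j from heq.symm]
          exact hjadj
        · -- i' ≥ j
          simp only [hrot, if_neg (by omega : ¬ i' ≤ j - 1), if_neg (by omega : ¬ i' + 1 ≤ j - 1)]
          exact hx.1 i' hi'
      · intro i₁ hi₁ i₂ hi₂ heq
        simp only [hrot] at heq
        rcases le_or_gt i₁ (j-1) with h₁ | h₁ <;> rcases le_or_gt i₂ (j-1) with h₂ | h₂
        · rw [if_pos h₁, if_pos h₂] at heq
          have := hx.2 (j-1-i₁) (by omega) (j-1-i₂) (by omega) heq
          omega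
        · rw [if_pos h₁, if_neg (by omega)] at heq
          have := hx.2 (j-1-i₁) (by omega) i₂ (by omega) heq
          omega
        · rw [if_neg (by omega), if_pos h₂] at heq
          have := hx.2 i₁ (by omega) (j-1-i₂) (by omega) heq
          omega
        · rw [if_neg (by omega), if_neg (by omega)] at heq
          exact hx.2 i₁ (by omega) i₂ (by omega) heq
    have hrotr : H.Reachable b₀ (rot 0) := by
      rw [hrot0]
      exact hreach (j-1) (by omega)
    have := (endp rot hrotp hrotr).1
    rw [hrot0] at this
    exact this
  have hdet : ∀ j ∈ A, ∀ i, i < j → (2*k-2) + j ≤ M + 1 + i → ¬(σ i ∧ σ ((2*k-2) + j - 1 - i)) := by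
    rintro j hj i hij hbound ⟨h1, h2⟩
    have hjm := hAsubM hj
    simp only [Finset.mem_Icc] at hjm
    have hjadj : H.Adj (x 0) (x j) := by
      rw [hA] at hj
      exact (Finset.mem_filter.mp hj).2
    have hjk : j ≤ 2*k-3 := by
      have := hA1 hj
      simp only [Finset.mem_Icc] at this
      exact this.2
    set d := 2*k-2 with hd
    have hd2 : 2 ≤ d := by omega
    set t := d + j - 1 - i with ht
    have htM : t ≤ M := by omega
    apply hnop
    set y : ℕ → V := fun s => if s ≤ i then x (i - s) else x (j + s - i - 1) with hy
    have hy0 : y 0 = x i := by simp [hy]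
    have hyd : y d = x t := by
      simp only [hy, if_neg (by omega : ¬ d ≤ i)]
      exact congrArg x (by omega)
    refine ⟨y, ⟨?_, ?_⟩, ?_, ?_⟩
    · intro s hs
      rcases Nat.lt_or_ge s i with hlt | hge
      · simp only [hy, if_pos (by omega : s ≤ i), if_pos (by omega : s + 1 ≤ i)]
        have := hx.1 (i - s - 1) (by omega)
        rw [show i - s - 1 + 1 = i - s by omega] at this
        rw [show i - (s+1) = i - s - 1 by omega]
        exact this.symm
      rcases Nat.eq_or_lt_of_le hge with heq | hgt
      · simp only [hy, if_pos (by omega : s ≤ i), if_neg (by omega : ¬ s + 1 ≤ i)]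
        rw [show i - s = 0 by omega, show j + (s+1) - i - 1 = j by omega]
        exact hjadj
      · simp only [hy, if_neg (by omega : ¬ s ≤ i), if_neg (by omega : ¬ s + 1 ≤ i)]
        have := hx.1 (j + s - i - 1) (by omega)
        rw [show j + s - i - 1 + 1 = j + (s+1) - i - 1 by omega] at this
        exact this
    · intro s₁ hs₁ s₂ hs₂ heq
      simp only [hy] at heq
      rcases le_or_gt s₁ i with h₁ | h₁ <;> rcases le_or_gt s₂ i with h₂ | h₂
      · rw [if_pos h₁, if_pos h₂] at heq
        have := hx.2 (i - s₁) (by omega) (i - s₂) (by omega) heq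
        omega
      · rw [if_pos h₁, if_neg (by omega)] at heq
        have := hx.2 (i - s₁) (by omega) (j + s₂ - i - 1) (by omega) heq
        omega
      · rw [if_neg (by omega), if_pos h₂] at heq
        have := hx.2 (j + s₁ - i - 1) (by omega) (i - s₂) (by omega) heq
        omega
      · rw [if_neg (by omega), if_neg (by omega)] at heq
        have := hx.2 (j + s₁ - i - 1) (by omega) (j + s₂ - i - 1) (by omega) heq
        omega
    · rw [hy0]
      exact h1
    · rw [hyd]
      exact h2
  have hmS : σ M := hxMS
  exact X7 hk σ A hM hx0S hmS hcovσ hndσ hA1 hA2 hA3 hdet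

/-- Delete all edges at a vertex. -/
def delV (G : SimpleGraph V) (b : V) : SimpleGraph V where
  Adj u v := G.Adj u v ∧ u ≠ b ∧ v ≠ b
  symm := ⟨fun u v ⟨h, h1, h2⟩ => ⟨h.symm, h2, h1⟩⟩
  loopless := ⟨fun v h => G.irrefl h.1⟩

instance (G : SimpleGraph V) [DecidableRel G.Adj] (b : V) : DecidableRel (delV G b).Adj :=
  fun u v => inferInstanceAs (Decidable (G.Adj u v ∧ u ≠ b ∧ v ≠ b))

/-- The subgraph of `G - a` consisting of edges meeting `N(a)`. -/
def auxH (G : SimpleGraph V) [DecidableRel G.Adj] (a : V) : SimpleGraph V where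
  Adj u v := G.Adj u v ∧ u ≠ a ∧ v ≠ a ∧ (u ∈ G.neighborFinset a ∨ v ∈ G.neighborFinset a)
  symm := ⟨fun u v ⟨h, h1, h2, h3⟩ => ⟨h.symm, h2, h1, h3.symm⟩⟩
  loopless := ⟨fun v h => G.irrefl h.1⟩

instance (G : SimpleGraph V) [DecidableRel G.Adj] (a : V) : DecidableRel (auxH G a).Adj :=
  fun u v => inferInstanceAs (Decidable (G.Adj u v ∧ u ≠ a ∧ v ≠ a ∧
    (u ∈ G.neighborFinset a ∨ v ∈ G.neighborFinset a)))

lemma mem_common {G : SimpleGraph V} [DecidableRel G.Adj] {a b v : V} :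
    v ∈ G.neighborFinset a ∩ G.neighborFinset b ↔ G.Adj a v ∧ G.Adj b v := by
  simp [Finset.mem_inter, SimpleGraph.mem_neighborFinset]

lemma mainAux (k : ℕ) (hk : 2 ≤ k) (a : V) :
    ∀ (N : ℕ) (G : SimpleGraph V) [DecidableRel G.Adj],
    (∀ z : ℕ → V, ¬ CycFun G z (2*k)) →
    G.edgeFinset.card ≤ N →
    ∑ b ∈ univ.erase a, ((G.neighborFinset a) ∩ (G.neighborFinset b)).card
      ≤ (2*k-2) * ((univ.erase a).filter (fun b => 0 < G.degree b)).card := by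
  intro N
  induction N with
  | zero =>
    intro G _ hfree hcard
    have hnoadj : ∀ u v : V, ¬ G.Adj u v := by
      intro u v hadj
      have : s(u, v) ∈ G.edgeFinset := by
        rw [SimpleGraph.mem_edgeFinset]
        exact hadj
      have := Finset.card_pos.mpr ⟨_, this⟩
      omega
    have : ∀ b ∈ univ.erase a, ((G.neighborFinset a) ∩ (G.neighborFinset b)).card = 0 := by
      intro b _
      rw [Finset.card_eq_zero, Finset.eq_empty_iff_forall_notMem]
      intro v hv
      exact hnoadj a v (mem_common.mp hv).1
    rw [Finset.sum_congr rfl this]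
    simp
  | succ N ih =>
    intro G _ hfree hcard
    by_cases hA : ∃ b ∈ (univ.erase a).filter (fun b => 0 < G.degree b),
        ((G.neighborFinset a) ∩ (G.neighborFinset b)).card +
          (if G.Adj a b then G.degree b - 1 else 0) ≤ 2*k-2
    · -- peeling case
      obtain ⟨b, hbmem, hbc⟩ := hA
      simp only [Finset.mem_filter, Finset.mem_erase] at hbmem
      obtain ⟨⟨hba, -⟩, hbdeg⟩ := hbmem
      set G' := delV G b with hG'
      have hsub : ∀ u v, (delV G b).Adj u v → G.Adj u v := fun u v h => h.1
      have hfree' : ∀ z : ℕ → V, ¬ CycFun (delV G b) z (2*k) := by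
        intro z hz
        exact hfree z ⟨fun i hi => hsub _ _ (hz.1 i hi), hz.2⟩
      have hedgesub : (delV G b).edgeFinset ⊆ G.edgeFinset := by
        intro e
        induction e with
        | _ u v =>
          simp only [SimpleGraph.mem_edgeFinset, SimpleGraph.mem_edgeSet]
          exact hsub u v
      have hw : ∃ w, G.Adj b w := by
        rw [← SimpleGraph.degree_pos_iff_exists_adj]
        exact hbdeg
      obtain ⟨w, hw⟩ := hw
      have hstrict : (delV G b).edgeFinset ⊂ G.edgeFinset := by
        refine ⟨hedgesub, fun hbad => ?_⟩
        have : s(b, w) ∈ (delV G b).edgeFinset := by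
          apply hbad
          rw [SimpleGraph.mem_edgeFinset]
          exact hw
        rw [SimpleGraph.mem_edgeFinset, SimpleGraph.mem_edgeSet] at this
        exact this.2.1 rfl
      have hcard' : (delV G b).edgeFinset.card ≤ N := by
        have := Finset.card_lt_card hstrict
        omega
      have hih := ih (delV G b) hfree' hcard'
      -- pointwise bound
      have key : ∀ b' ∈ univ.erase a,
          ((G.neighborFinset a) ∩ (G.neighborFinset b')).card ≤
          (((delV G b).neighborFinset a) ∩ ((delV G b).neighborFinset b')).card +
          ((if b' = b then ((G.neighborFinset a) ∩ (G.neighborFinset b)).card else 0) +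
           (if G.Adj a b ∧ G.Adj b b' ∧ b' ≠ b then 1 else 0)) := by
        intro b' hb'
        simp only [Finset.mem_erase] at hb'
        by_cases hbb : b' = b
        · subst hbb
          simp only [if_pos rfl]
          have : (((delV G b').neighborFinset a) ∩ ((delV G b').neighborFinset b')) = ∅ := by
            rw [Finset.eq_empty_iff_forall_notMem]
            intro v hv
            have := (mem_common.mp hv).2
            exact this.2.1 rfl
          rw [this]
          simp
        · rw [if_neg hbb]
          by_cases hcase : G.Adj a b ∧ G.Adj b b'
          · rw [if_pos ⟨hcase.1, hcase.2, hbb⟩]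
            have hsubset : (G.neighborFinset a) ∩ (G.neighborFinset b') ⊆
                insert b (((delV G b).neighborFinset a) ∩ ((delV G b).neighborFinset b')) := by
              intro v hv
              rw [mem_common] at hv
              rw [Finset.mem_insert]
              by_cases hvb : v = b
              · exact Or.inl hvb
              · right
                rw [mem_common]
                exact ⟨⟨hv.1, hba.symm, hvb⟩, ⟨hv.2, hbb, hvb⟩⟩
            calc ((G.neighborFinset a) ∩ (G.neighborFinset b')).card
                ≤ (insert b (((delV G b).neighborFinset a) ∩ ((delV G b).neighborFinset b'))).card :=
                  Finset.card_le_card hsubset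
              _ ≤ (((delV G b).neighborFinset a) ∩ ((delV G b).neighborFinset b')).card + 1 :=
                  Finset.card_insert_le _ _
          · rw [if_neg (fun h => hcase ⟨h.1, h.2.1⟩)]
            have hsubset : (G.neighborFinset a) ∩ (G.neighborFinset b') ⊆
                ((delV G b).neighborFinset a) ∩ ((delV G b).neighborFinset b') := by
              intro v hv
              rw [mem_common] at hv
              have hvb : v ≠ b := by
                intro hvb
                subst hvb
                exact hcase ⟨hv.1, hv.2.symm⟩
              rw [mem_common]
              exact ⟨⟨hv.1, hba.symm, hvb⟩, ⟨hv.2, hbb, hvb⟩⟩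
            simpa using Finset.card_le_card hsubset
      have hsum : ∑ b' ∈ univ.erase a, ((G.neighborFinset a) ∩ (G.neighborFinset b')).card ≤
          (∑ b' ∈ univ.erase a,
            (((delV G b).neighborFinset a) ∩ ((delV G b).neighborFinset b')).card) +
          (((G.neighborFinset a) ∩ (G.neighborFinset b)).card +
            (if G.Adj a b then G.degree b - 1 else 0)) := by
        calc ∑ b' ∈ univ.erase a, ((G.neighborFinset a) ∩ (G.neighborFinset b')).card
            ≤ ∑ b' ∈ univ.erase a,
              ((((delV G b).neighborFinset a) ∩ ((delV G b).neighborFinset b')).card +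
              ((if b' = b then ((G.neighborFinset a) ∩ (G.neighborFinset b)).card else 0) +
               (if G.Adj a b ∧ G.Adj b b' ∧ b' ≠ b then 1 else 0))) := Finset.sum_le_sum key
          _ = (∑ b' ∈ univ.erase a,
                (((delV G b).neighborFinset a) ∩ ((delV G b).neighborFinset b')).card) +
              ((∑ b' ∈ univ.erase a,
                (if b' = b then ((G.neighborFinset a) ∩ (G.neighborFinset b)).card else 0)) +
               (∑ b' ∈ univ.erase a, (if G.Adj a b ∧ G.Adj b b' ∧ b' ≠ b then 1 else 0))) := by
                rw [← Finset.sum_add_distrib, ← Finset.sum_add_distrib]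
          _ ≤ _ := by
              have e1 : (∑ b' ∈ univ.erase a,
                  (if b' = b then ((G.neighborFinset a) ∩ (G.neighborFinset b)).card else 0)) =
                  ((G.neighborFinset a) ∩ (G.neighborFinset b)).card := by
                rw [Finset.sum_ite_eq']
                rw [if_pos (Finset.mem_erase.mpr ⟨hba, Finset.mem_univ b⟩)]
              have e2 : (∑ b' ∈ univ.erase a, (if G.Adj a b ∧ G.Adj b b' ∧ b' ≠ b then 1 else 0)) ≤
                  (if G.Adj a b then G.degree b - 1 else 0) := by
                by_cases hab : G.Adj a b
                · rw [if_pos hab]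
                  have : (∑ b' ∈ univ.erase a, (if G.Adj a b ∧ G.Adj b b' ∧ b' ≠ b then 1 else 0))
                      = ((univ.erase a).filter (fun b' => G.Adj a b ∧ G.Adj b b' ∧ b' ≠ b)).card := by
                    rw [Finset.card_filter]
                  rw [this]
                  have hsub2 : (univ.erase a).filter (fun b' => G.Adj a b ∧ G.Adj b b' ∧ b' ≠ b) ⊆
                      (G.neighborFinset b).erase a := by
                    intro u hu
                    simp only [Finset.mem_filter, Finset.mem_erase, Finset.mem_univ] at hu
                    rw [Finset.mem_erase, SimpleGraph.mem_neighborFinset]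
                    exact ⟨hu.1.1, hu.2.2.1⟩
                  calc ((univ.erase a).filter (fun b' => G.Adj a b ∧ G.Adj b b' ∧ b' ≠ b)).card
                      ≤ ((G.neighborFinset b).erase a).card := Finset.card_le_card hsub2
                    _ = G.degree b - 1 := by
                        rw [Finset.card_erase_of_mem, SimpleGraph.card_neighborFinset_eq_degree]
                        rw [SimpleGraph.mem_neighborFinset]
                        exact hab.symm
                · rw [if_neg hab]
                  have hz0 : (∑ b' ∈ univ.erase a,
                      (if G.Adj a b ∧ G.Adj b b' ∧ b' ≠ b then 1 else 0)) = 0 :=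
                    Finset.sum_eq_zero (fun u _ => by rw [if_neg (fun h => hab h.1)])
                  omega
              rw [e1]
              omega
      -- conclude case A
      set U := (univ.erase a).filter (fun b' => 0 < G.degree b') with hU
      have hbU : b ∈ U := by
        rw [hU, Finset.mem_filter, Finset.mem_erase]
        exact ⟨⟨hba, Finset.mem_univ b⟩, hbdeg⟩
      have hUsub : ((univ.erase a).filter (fun b' => 0 < (delV G b).degree b')) ⊆ U.erase b := by
        intro u hu
        rw [Finset.mem_filter] at hu
        rw [SimpleGraph.degree_pos_iff_exists_adj] at hu
        obtain ⟨hu1, w', hw'⟩ := hu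
        rw [Finset.mem_erase, hU, Finset.mem_filter]
        refine ⟨hw'.2.1, hu1, ?_⟩
        rw [SimpleGraph.degree_pos_iff_exists_adj]
        exact ⟨w', hw'.1⟩
      have hUcard : ((univ.erase a).filter (fun b' => 0 < (delV G b).degree b')).card ≤
          U.card - 1 := by
        calc ((univ.erase a).filter (fun b' => 0 < (delV G b).degree b')).card
            ≤ (U.erase b).card := Finset.card_le_card hUsub
          _ = U.card - 1 := Finset.card_erase_of_mem hbU
      have hUpos : 1 ≤ U.card := Finset.card_pos.mpr ⟨b, hbU⟩
      calc ∑ b' ∈ univ.erase a, ((G.neighborFinset a) ∩ (G.neighborFinset b')).card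
          ≤ (∑ b' ∈ univ.erase a,
              (((delV G b).neighborFinset a) ∩ ((delV G b).neighborFinset b')).card) +
            (((G.neighborFinset a) ∩ (G.neighborFinset b)).card +
              (if G.Adj a b then G.degree b - 1 else 0)) := hsum
        _ ≤ (2*k-2) * ((univ.erase a).filter (fun b' => 0 < (delV G b).degree b')).card
            + (2*k-2) := by
            have := hih
            omega
        _ ≤ (2*k-2) * (U.card - 1) + (2*k-2) := by
            have := Nat.mul_le_mul_left (2*k-2) hUcard
            omega
        _ = (2*k-2) * U.card := by
            have : U.card - 1 + 1 = U.card := by omega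
            calc (2*k-2) * (U.card - 1) + (2*k-2) = (2*k-2) * (U.card - 1 + 1) := by ring
              _ = (2*k-2) * U.card := by rw [this]
    · -- rich case
      push_neg at hA
      have hrich : ∀ b ∈ (univ.erase a).filter (fun b => 0 < G.degree b),
          2*k-1 ≤ ((G.neighborFinset a) ∩ (G.neighborFinset b)).card +
            (if G.Adj a b then G.degree b - 1 else 0) := by
        intro b hb
        have := hA b hb
        omega
      have claim : ∀ b ∈ univ.erase a, ((G.neighborFinset a) ∩ (G.neighborFinset b)).card ≤ 2*k-2 := by
        intro b hbmem
        by_contra hfb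
        push_neg at hfb
        replace hfb : 2*k-1 ≤ ((G.neighborFinset a) ∩ (G.neighborFinset b)).card := by omega
        rw [Finset.mem_erase] at hbmem
        obtain ⟨hba, -⟩ := hbmem
        set S := G.neighborFinset a with hS
        set H := auxH G a with hH
        have hHadj : ∀ u v, H.Adj u v ↔ (G.Adj u v ∧ u ≠ a ∧ v ≠ a ∧ (u ∈ S ∨ v ∈ S)) := by
          intro u v; rfl
        have haS : a ∉ S := by
          rw [hS, SimpleGraph.mem_neighborFinset]
          exact fun h => G.irrefl h
        have hSne : ∀ v ∈ S, v ≠ a := by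
          intro v hv hva
          subst hva
          exact haS hv
        -- common neighborhoods sit inside H
        have hsubH : ∀ w, w ≠ a → (G.neighborFinset a) ∩ (G.neighborFinset w) ⊆
            H.neighborFinset w := by
          intro w hwa v hv
          rw [mem_common] at hv
          rw [SimpleGraph.mem_neighborFinset, hHadj]
          exact ⟨hv.2, hwa, hSne v (by rw [hS, SimpleGraph.mem_neighborFinset]; exact hv.1),
            Or.inr (by rw [hS, SimpleGraph.mem_neighborFinset]; exact hv.1)⟩
        have hdegHb : 2*k-1 ≤ H.degree b := by
          rw [← SimpleGraph.card_neighborFinset_eq_degree]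
          calc 2*k-1 ≤ ((G.neighborFinset a) ∩ (G.neighborFinset b)).card := hfb
            _ ≤ (H.neighborFinset b).card := Finset.card_le_card (hsubH b hba)
        -- last-edge lemma
        have last : ∀ (u v : V) (p : H.Walk u v), u = v ∨ ∃ w, H.Adj w v := by
          intro u v p
          induction p with
          | nil => exact Or.inl rfl
          | @cons c c' v' hadj q ih =>
            rcases ih with rfl | ⟨w, hw⟩
            · exact Or.inr ⟨c, hadj⟩
            · exact Or.inr ⟨w, hw⟩
        -- every reachable vertex is ≠ a, has positive G-degree
        have hreachgood : ∀ v, H.Reachable b v → v ≠ a ∧ 0 < G.degree v := by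
          intro v hrv
          obtain ⟨p⟩ := hrv
          rcases last _ _ p with rfl | ⟨w, hw⟩
          · refine ⟨hba, ?_⟩
            rw [SimpleGraph.degree_pos_iff_exists_adj]
            obtain ⟨u, hu⟩ := Finset.card_pos.mp (show 0 < (S ∩ (G.neighborFinset b)).card by omega)
            exact ⟨u, (mem_common.mp hu).2⟩
          · rw [hHadj] at hw
            refine ⟨hw.2.2.1, ?_⟩
            rw [SimpleGraph.degree_pos_iff_exists_adj]
            exact ⟨w, hw.1.symm⟩
        have hcovH : ∀ u v, H.Adj u v → u ∈ S ∨ v ∈ S := by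
          intro u v huv
          rw [hHadj] at huv
          exact huv.2.2.2
        have hdS : ∀ v, H.Reachable b v → v ∈ S → k ≤ H.degree v := by
          intro v hrv hvS
          have hva : v ≠ a := hSne v hvS
          have havadj : G.Adj a v := by
            rw [hS, SimpleGraph.mem_neighborFinset] at hvS
            exact hvS
          have hrichv := hrich v (by
            rw [Finset.mem_filter, Finset.mem_erase]
            refine ⟨⟨hva, Finset.mem_univ v⟩, ?_⟩
            rw [SimpleGraph.degree_pos_iff_exists_adj]
            exact ⟨a, havadj.symm⟩)
          rw [if_pos havadj] at hrichv
          -- H-neighborhood of v is G-neighborhood minus a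
          have hnbr : H.neighborFinset v = (G.neighborFinset v).erase a := by
            ext u
            simp only [SimpleGraph.mem_neighborFinset, hHadj, Finset.mem_erase]
            constructor
            · rintro ⟨h1, -, h3, -⟩
              exact ⟨h3, h1⟩
            · rintro ⟨h1, h2⟩
              exact ⟨h2, hva, h1, Or.inl hvS⟩
          have hdegH : H.degree v = G.degree v - 1 := by
            rw [← SimpleGraph.card_neighborFinset_eq_degree, hnbr,
              Finset.card_erase_of_mem (by rw [SimpleGraph.mem_neighborFinset]; exact havadj.symm),
              SimpleGraph.card_neighborFinset_eq_degree]
          have hfsub : (S ∩ (G.neighborFinset v)).card ≤ H.degree v := by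
            rw [← SimpleGraph.card_neighborFinset_eq_degree]
            exact Finset.card_le_card (hsubH v hva)
          have hdegpos : 0 < G.degree v := by
            rw [SimpleGraph.degree_pos_iff_exists_adj]
            exact ⟨a, havadj.symm⟩
          omega
        have hdT : ∀ v, H.Reachable b v → v ∉ S → 2*k-1 ≤ H.degree v := by
          intro v hrv hvS
          obtain ⟨hva, hvdeg⟩ := hreachgood v hrv
          have hnoadj : ¬ G.Adj a v := by
            rw [← SimpleGraph.mem_neighborFinset]
            exact hvS
          have hrichv := hrich v (by
            rw [Finset.mem_filter, Finset.mem_erase]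
            exact ⟨⟨hva, Finset.mem_univ v⟩, hvdeg⟩)
          rw [if_neg hnoadj] at hrichv
          simp only [Nat.add_zero] at hrichv
          calc 2*k-1 ≤ ((G.neighborFinset a) ∩ (G.neighborFinset v)).card := hrichv
            _ ≤ (H.neighborFinset v).card := Finset.card_le_card (hsubH v hva)
            _ = H.degree v := SimpleGraph.card_neighborFinset_eq_degree _ _
        set R := insert b (H.neighborFinset b) with hR
        have hRreach : ∀ v ∈ R, H.Reachable b v := by
          intro v hv
          rw [hR, Finset.mem_insert] at hv
          rcases hv with rfl | hv
          · exact SimpleGraph.Reachable.refl _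
          · rw [SimpleGraph.mem_neighborFinset] at hv
            exact hv.reachable
        have hRcard : 2*k ≤ R.card := by
          rw [hR, Finset.card_insert_of_notMem (by
            rw [SimpleGraph.mem_neighborFinset]
            exact fun h => H.irrefl h)]
          rw [SimpleGraph.card_neighborFinset_eq_degree]
          omega
        rcases lemX H S k hk b hcovH hdS hdT R hRreach hRcard with ⟨x, hxp, hx0, hxd⟩ | ⟨z, hz⟩
        · -- build a 2k-cycle in G through a
          have hxne : ∀ i, i ≤ 2*k-2 → x i ≠ a := by
            intro i hi
            rcases Nat.lt_or_ge i (2*k-2) with hlt | hge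
            · have := hxp.1 i hlt
              rw [hHadj] at this
              exact this.2.1
            · have hieq : i = 2*k-2 := by omega
              have := hxp.1 (2*k-3) (by omega)
              rw [hHadj] at this
              rw [hieq, show 2*k-2 = 2*k-3+1 by omega]
              exact this.2.2.1
          set w : ℕ → V := fun i => if i = 0 then a else x (i-1) with hwdef
          have hw0 : w 0 = a := by simp [hwdef]
          have hwj : ∀ i, 1 ≤ i → w i = x (i-1) := by
            intro i hi
            simp only [hwdef, if_neg (by omega : ¬ i = 0)]
          apply hfree w
          constructor
          · intro i hi
            rcases Nat.eq_zero_or_pos i with rfl | hipos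
            · rw [Nat.mod_eq_of_lt (by omega), hw0, hwj 1 le_rfl]
              rw [show (1:ℕ) - 1 = 0 by omega]
              rw [hS, SimpleGraph.mem_neighborFinset] at hx0
              exact hx0
            rcases Nat.lt_or_ge i (2*k-1) with hlast | hlast
            · rw [Nat.mod_eq_of_lt (by omega), hwj i (by omega), hwj (i+1) (by omega)]
              have := hxp.1 (i-1) (by omega)
              rw [hHadj] at this
              rw [show i + 1 - 1 = i - 1 + 1 by omega]
              exact this.1
            · have hieq : i = 2*k-1 := by omega
              subst hieq
              rw [show (2*k-1+1) % (2*k) = 0 by rw [show 2*k-1+1 = 2*k by omega]; exact Nat.mod_self _]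
              rw [hw0, hwj (2*k-1) (by omega)]
              rw [hS, SimpleGraph.mem_neighborFinset] at hxd
              rw [show 2*k-1-1 = 2*k-2 by omega]
              exact hxd.symm
          · intro i hi j hj heq
            rcases Nat.eq_zero_or_pos i with rfl | hipos <;> rcases Nat.eq_zero_or_pos j with rfl | hjpos
            · rfl
            · rw [hw0, hwj j (by omega)] at heq
              exact absurd heq.symm (hxne (j-1) (by omega))
            · rw [hwj i (by omega), hw0] at heq
              exact absurd heq (hxne (i-1) (by omega))
            · rw [hwj i (by omega), hwj j (by omega)] at heq
              have := hxp.2 (i-1) (by omega) (j-1) (by omega) heq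
              omega
        · exact hfree z ⟨fun i hi => ((hHadj _ _).mp (hz.1 i hi)).1, hz.2⟩
      -- conclude case B
      calc ∑ b ∈ univ.erase a, ((G.neighborFinset a) ∩ (G.neighborFinset b)).card
          ≤ ∑ b ∈ univ.erase a, (if 0 < G.degree b then 2*k-2 else 0) := by
            apply Finset.sum_le_sum
            intro b hb
            by_cases hdeg : 0 < G.degree b
            · rw [if_pos hdeg]
              exact claim b hb
            · rw [if_neg hdeg]
              have : (G.neighborFinset a) ∩ (G.neighborFinset b) = ∅ := by
                rw [Finset.eq_empty_iff_forall_notMem]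
                intro v hv
                apply hdeg
                rw [SimpleGraph.degree_pos_iff_exists_adj]
                exact ⟨v, (mem_common.mp hv).2⟩
              rw [this]
              simp
        _ = (2*k-2) * ((univ.erase a).filter (fun b => 0 < G.degree b)).card := by
            rw [← Finset.sum_filter, Finset.sum_const, smul_eq_mul, Nat.mul_comm]

end EvenCycleLemma

/-- In a `C_{2k}`-free graph on `n` vertices, for every vertex `a`, the number of paths with
3 vertices starting at `a` satisfies `∑_{b ≠ a} f(a,b) ≤ (2k-2)·n`, where `f(a,b)` is the
number of common neighbors of `a` and `b`. -/
theorem stmt_2 {V : Type*} [Fintype V] [DecidableEq V] (G : SimpleGraph V)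
    [DecidableRel G.Adj] (k : ℕ) (hk : 2 ≤ k)
    (hfree : ∀ (v : V) (w : G.Walk v v), w.IsCycle → w.length ≠ 2 * k) (a : V) :
    ∑ b ∈ Finset.univ.erase a, ((G.neighborFinset a) ∩ (G.neighborFinset b)).card
      ≤ (2 * k - 2) * Fintype.card V := by
  have hfree' : ∀ z : ℕ → V, ¬ CycFun G z (2*k) := by
    intro z hz
    obtain ⟨u, w, hc, hl⟩ := cycfun_to_walk hz (by omega)
    exact hfree u w hc hl
  have h := mainAux k hk a G.edgeFinset.card G hfree' le_rfl
  have hUcard : ((univ.erase a).filter (fun b => 0 < G.degree b)).card ≤ Fintype.card V := by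
    calc ((univ.erase a).filter (fun b => 0 < G.degree b)).card
        ≤ (univ : Finset V).card := Finset.card_le_card (fun x _ => Finset.mem_univ x)
      _ = Fintype.card V := Finset.card_univ
  calc ∑ b ∈ Finset.univ.erase a, ((G.neighborFinset a) ∩ (G.neighborFinset b)).card
      ≤ (2*k-2) * ((univ.erase a).filter (fun b => 0 < G.degree b)).card := h
    _ ≤ (2*k-2) * Fintype.card V := Nat.mul_le_mul_left _ hUcard
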